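/- Let q be a pure unit quaternion, let x and y be unit quaternions, and let F(y) = {y·(r + s·q) : r, s ∈ ℝ, r² + s² = 1} be the right q-fiber through y. Then for all l, m ∈ ℝ with l² + m² = 1, the infimum distance (with respect to the norm on ℍ) from x·(l + m·q) to the set F(y) equals the infimum distance from x to F(y). (There is a well-defined distance between two right q-fibers: the distance from a point on one fiber to the other fiber does not depend on the chosen point.) -/

import Mathlib

open Quaternion

set_option maxHeartbeats 1000000 in
/-- There is a well-defined distance between two right `q`-fibers: the infimum distance
from a point `x * (l + m·q)` of the right `q`-fiber through `x` to the right `q`-fiber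
through `y` does not depend on the chosen point of the fiber through `x`. -/
theorem infDist_to_right_fiber_well_defined
    (q : ℍ[ℝ]) (hqre : q.re = 0) (hqnorm : ‖q‖ = 1)
    (x y : ℍ[ℝ]) (hx : ‖x‖ = 1) (hy : ‖y‖ = 1)
    (l m : ℝ) (hlm : l ^ 2 + m ^ 2 = 1) :
    Metric.infDist (x * ((l : ℍ[ℝ]) + (m : ℍ[ℝ]) * q))
        {z : ℍ[ℝ] | ∃ r s : ℝ, r ^ 2 + s ^ 2 = 1 ∧ z = y * ((r : ℍ[ℝ]) + (s : ℍ[ℝ]) * q)} =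
      Metric.infDist x
        {z : ℍ[ℝ] | ∃ r s : ℝ, r ^ 2 + s ^ 2 = 1 ∧ z = y * ((r : ℍ[ℝ]) + (s : ℍ[ℝ]) * q)} := by
  set F := {z : ℍ[ℝ] | ∃ r s : ℝ, r ^ 2 + s ^ 2 = 1 ∧ z = y * ((r : ℍ[ℝ]) + (s : ℍ[ℝ]) * q)}
    with hF
  set u : ℍ[ℝ] := (l : ℍ[ℝ]) + (m : ℍ[ℝ]) * q with hu
  -- the imaginary part of `q` has squared length 1
  have hqns : Quaternion.normSq q = 1 := by
    rw [Quaternion.normSq_eq_norm_mul_self, hqnorm, mul_one]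
  have hqsq : q.imI ^ 2 + q.imJ ^ 2 + q.imK ^ 2 = 1 := by
    rw [Quaternion.normSq_def'] at hqns
    nlinarith [hqns, hqre]
  -- `q` squares to `-1`
  have hq2 : q * q = -1 := by
    ext <;>
      simp [Quaternion.re_mul, Quaternion.imI_mul, Quaternion.imJ_mul, Quaternion.imK_mul,
        hqre] <;> nlinarith [hqsq]
  have h1 := congrArg QuaternionAlgebra.re hq2
  have h2 := congrArg QuaternionAlgebra.imI hq2
  have h3 := congrArg QuaternionAlgebra.imJ hq2
  have h4 := congrArg QuaternionAlgebra.imK hq2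
  simp [Quaternion.re_mul, Quaternion.imI_mul, Quaternion.imJ_mul, Quaternion.imK_mul]
    at h1 h2 h3 h4
  -- multiplication rule inside the circle `a + b q`
  have key : ∀ a b : ℝ, ((a : ℍ[ℝ]) + (b : ℍ[ℝ]) * q) * u
      = ((a * l - b * m : ℝ) : ℍ[ℝ]) + ((a * m + b * l : ℝ) : ℍ[ℝ]) * q := by
    intro a b
    rw [hu]
    ext <;> simp [Quaternion.re_mul, Quaternion.imI_mul, Quaternion.imJ_mul,
        Quaternion.imK_mul] <;>
      [linear_combination b*m*h1; linear_combination b*m*h2; linear_combination b*m*h3;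
       linear_combination b*m*h4]
  -- `u` is a unit quaternion
  have hunorm : ‖u‖ = 1 := by
    have hur : u.re = l := by simp [hu, hqre]
    have hui : u.imI = m * q.imI := by simp [hu]
    have huj : u.imJ = m * q.imJ := by simp [hu]
    have huk : u.imK = m * q.imK := by simp [hu]
    have hns : Quaternion.normSq u = 1 := by
      rw [Quaternion.normSq_def', hur, hui, huj, huk]
      nlinarith [hqsq, hlm]
    have h := Quaternion.normSq_eq_norm_mul_self (a := u)
    nlinarith [norm_nonneg u, hns, h]
  -- right multiplication by `u` is an isometry
  have hiso : Isometry (fun z : ℍ[ℝ] => z * u) := by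
    intro a b
    simp only [edist_dist, dist_eq_norm, ← sub_mul]
    rw [norm_mul, hunorm, mul_one]
  -- right multiplication by `u` maps the fiber onto itself
  have himg : (fun z : ℍ[ℝ] => z * u) '' F = F := by
    apply Set.Subset.antisymm
    · rintro _ ⟨z, ⟨r, s, hrs, rfl⟩, rfl⟩
      refine ⟨r * l - s * m, r * m + s * l, by nlinarith [hrs, hlm], ?_⟩
      dsimp only
      rw [mul_assoc, key r s]
    · rintro z ⟨r, s, hrs, rfl⟩
      refine ⟨y * (((r * l + s * m : ℝ) : ℍ[ℝ]) + ((s * l - r * m : ℝ) : ℍ[ℝ]) * q),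
        ⟨r * l + s * m, s * l - r * m, by nlinarith [hrs, hlm], rfl⟩, ?_⟩
      dsimp only
      rw [mul_assoc, key,
        show (r * l + s * m) * l - (s * l - r * m) * m = r by linear_combination r * hlm,
        show (r * l + s * m) * m + (s * l - r * m) * l = s by linear_combination s * hlm]
  calc Metric.infDist (x * u) F
      = Metric.infDist ((fun z : ℍ[ℝ] => z * u) x) ((fun z : ℍ[ℝ] => z * u) '' F) := by
        rw [himg]
    _ = Metric.infDist x F := Metric.infDist_image hiso
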